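/- Let D ∈ ℝ^{n×k} and S ∈ ℝ^{k×p} with ⟨S, (DᵀD)S⟩ ≠ 0. Define the spectral (Barzilai–Borwein) stepsizes α^{BB1} = (1/2)·⟨S,S⟩ / ⟨S, (DᵀD)S⟩ and α^{BB2} = (1/2)·⟨S, (DᵀD)S⟩ / ⟨(DᵀD)S, (DᵀD)S⟩. Then 1/(2‖DᵀD‖₂) ≤ α^{BB2} ≤ min{ α^{BB1}, 1/(2σ_min²(D)) }, where σ_min(D) denotes the smallest nonzero singular value of D. -/

import Mathlib

open Matrix

open scoped RealInnerProductSpace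

noncomputable def specNorm {α β : Type*} [Fintype α] [Fintype β] [DecidableEq β]
    (A : Matrix α β ℝ) : ℝ :=
  ‖LinearMap.toContinuousLinearMap (Matrix.toEuclideanLin A)‖

set_option maxHeartbeats 1000000 in
/-- Bounds on the Barzilai–Borwein stepsizes for the `X`-block of the DL problem:
`1/(2‖DᵀD‖₂) ≤ α^{BB2} ≤ min{α^{BB1}, 1/(2 σ_min²(D))}`, where `σ_min(D)` is the
smallest nonzero singular value of `D`. -/
theorem bb_stepsize_bounds_X
    {n k p : ℕ} (D : Matrix (Fin n) (Fin k) ℝ) (S : Matrix (Fin k) (Fin p) ℝ)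
    (hD : (Dᵀ * D).IsHermitian)
    (σmin : ℝ) (hσpos : 0 < σmin)
    (hσeig : ∃ i, hD.eigenvalues i = σmin ^ 2)
    (hσmin : ∀ i, hD.eigenvalues i ≠ 0 → σmin ^ 2 ≤ hD.eigenvalues i)
    (hS : (Sᵀ * (Dᵀ * D * S)).trace ≠ 0)
    (αBB1 αBB2 : ℝ)
    (h1 : αBB1 = (1 / 2) * (Sᵀ * S).trace / (Sᵀ * (Dᵀ * D * S)).trace)
    (h2 : αBB2 = (1 / 2) * (Sᵀ * (Dᵀ * D * S)).trace /
      ((Dᵀ * D * S)ᵀ * (Dᵀ * D * S)).trace) :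
    1 / (2 * specNorm (Dᵀ * D)) ≤ αBB2 ∧ αBB2 ≤ min αBB1 (1 / (2 * σmin ^ 2)) := by
  classical
  set A := Dᵀ * D with hAdef
  set B := hD.eigenvectorBasis with hBdef
  set lam := hD.eigenvalues with hlamdef
  set N := specNorm A with hNdef
  set a := (Sᵀ * S).trace with hadef
  set b := (Sᵀ * (A * S)).trace with hbdef
  set c := ((A * S)ᵀ * (A * S)).trace with hcdef
  -- the continuous linear map
  set T := LinearMap.toContinuousLinearMap (Matrix.toEuclideanLin A) with hTdef
  have hNT : N = ‖T‖ := rfl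
  have hsym : (Matrix.toEuclideanLin A).IsSymmetric :=
    Matrix.isHermitian_iff_isSymmetric.1 hD
  have hTB : ∀ i, Matrix.toEuclideanLin A (B i) = lam i • B i := by
    intro i
    ext x
    exact congrFun (hD.mulVec_eigenvectorBasis i) x
  have key : ∀ (i : Fin k) (u : EuclideanSpace ℝ (Fin k)),
      ⟪B i, Matrix.toEuclideanLin A u⟫ = lam i * ⟪B i, u⟫ := by
    intro i u
    rw [← hsym (B i) u, hTB i, real_inner_smul_left]
  have hquadb : ∀ u : EuclideanSpace ℝ (Fin k),
      ⟪u, Matrix.toEuclideanLin A u⟫ = ∑ i, lam i * ⟪B i, u⟫ ^ 2 := by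
    intro u
    rw [← B.sum_inner_mul_inner u (Matrix.toEuclideanLin A u)]
    refine Finset.sum_congr rfl fun i _ => ?_
    rw [key, real_inner_comm u (B i)]
    ring
  have hquadc : ∀ u : EuclideanSpace ℝ (Fin k),
      ⟪Matrix.toEuclideanLin A u, Matrix.toEuclideanLin A u⟫
        = ∑ i, lam i ^ 2 * ⟪B i, u⟫ ^ 2 := by
    intro u
    rw [← B.sum_inner_mul_inner (Matrix.toEuclideanLin A u) (Matrix.toEuclideanLin A u)]
    refine Finset.sum_congr rfl fun i _ => ?_
    have hcomm : ⟪Matrix.toEuclideanLin A u, B i⟫ = lam i * ⟪B i, u⟫ := by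
      rw [real_inner_comm]; exact key i u
    rw [hcomm, key]
    ring
  -- eigenvalues are nonnegative and bounded by the operator norm
  have hpsd : A.PosSemidef := by
    rw [hAdef, ← Matrix.conjTranspose_eq_transpose_of_trivial]
    exact Matrix.posSemidef_conjTranspose_mul_self D
  have hnn : ∀ i, 0 ≤ lam i := fun i => hpsd.eigenvalues_nonneg i
  have hlamleN : ∀ i, lam i ≤ N := by
    intro i
    have hnB : ‖B i‖ = 1 := B.orthonormal.1 i
    have h1' : ‖T (B i)‖ = lam i := by
      have : T (B i) = lam i • B i := hTB i
      rw [this, norm_smul, hnB, mul_one, Real.norm_eq_abs, abs_of_nonneg (hnn i)]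
    have h2' := T.le_opNorm (B i)
    rw [h1', hnB, mul_one, ← hNT] at h2'
    exact h2'
  have hNpos : 0 < N := by
    obtain ⟨i0, hi0⟩ := hσeig
    have : σmin ^ 2 ≤ N := hi0 ▸ hlamleN i0
    nlinarith
  -- columns as Euclidean vectors
  set v : Fin p → EuclideanSpace ℝ (Fin k) :=
    fun j => (WithLp.equiv 2 (Fin k → ℝ)).symm (fun i => S i j) with hvdef
  have hTv : ∀ j, Matrix.toEuclideanLin A (v j)
      = (WithLp.equiv 2 (Fin k → ℝ)).symm (fun i => (A * S) i j) := by
    intro j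
    have hcol : (A *ᵥ fun i => S i j) = fun i => (A * S) i j := by
      funext i
      simp [Matrix.mulVec, dotProduct, Matrix.mul_apply]
    rw [hvdef, WithLp.equiv_symm_apply, Matrix.toEuclideanLin_apply_piLp_toLp, hcol]
  have trace_form : ∀ {q : ℕ} (M N' : Matrix (Fin q) (Fin p) ℝ),
      (Mᵀ * N').trace = ∑ j, ∑ i, M i j * N' i j := by
    intro q M N'
    simp [Matrix.trace, Matrix.diag, Matrix.mul_apply]
  have inner_form : ∀ f g : Fin k → ℝ,
      ⟪(WithLp.equiv 2 (Fin k → ℝ)).symm f, (WithLp.equiv 2 (Fin k → ℝ)).symm g⟫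
        = ∑ i, f i * g i := by
    intro f g
    simp [PiLp.inner_apply, RCLike.inner_apply, conj_trivial, mul_comm]
  have hbsum : b = ∑ j, ⟪v j, Matrix.toEuclideanLin A (v j)⟫ := by
    rw [hbdef, trace_form]
    refine Finset.sum_congr rfl fun j _ => ?_
    rw [hTv j, hvdef]
    rw [inner_form]
  have hcsum : c = ∑ j, ⟪Matrix.toEuclideanLin A (v j), Matrix.toEuclideanLin A (v j)⟫ := by
    rw [hcdef, trace_form]
    refine Finset.sum_congr rfl fun j _ => ?_
    rw [hTv j, inner_form]
  -- positivity of b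
  have hmat : Sᵀ * (A * S) = (D * S)ᵀ * (D * S) := by
    rw [hAdef]
    simp only [Matrix.transpose_mul, Matrix.mul_assoc]
  have hbDS : b = ∑ j, ∑ i, (D * S) i j ^ 2 := by
    rw [hbdef, hmat, trace_form]
    refine Finset.sum_congr rfl fun j _ => Finset.sum_congr rfl fun i _ => (sq _).symm
  have hbnn : 0 ≤ b := by
    rw [hbDS]
    exact Finset.sum_nonneg fun j _ => Finset.sum_nonneg fun i _ => sq_nonneg _
  have hbne : b ≠ 0 := by rwa [hbdef, hAdef]
  have hbpos : 0 < b := lt_of_le_of_ne hbnn (Ne.symm hbne)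
  have hann : 0 ≤ a := by
    rw [hadef, trace_form]
    exact Finset.sum_nonneg fun j _ => Finset.sum_nonneg fun i _ => mul_self_nonneg _
  -- Cauchy-Schwarz: b^2 ≤ a * c
  have hCS : b ^ 2 ≤ a * c := by
    have hb2 : b = ∑ x : Fin p × Fin k, S x.2 x.1 * (A * S) x.2 x.1 := by
      rw [hbdef, trace_form, ← Fintype.sum_prod_type']
    have ha2 : a = ∑ x : Fin p × Fin k, S x.2 x.1 ^ 2 := by
      rw [hadef, trace_form, ← Fintype.sum_prod_type']
      simp [sq]
    have hc2 : c = ∑ x : Fin p × Fin k, (A * S) x.2 x.1 ^ 2 := by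
      rw [hcdef, trace_form, ← Fintype.sum_prod_type']
      simp [sq]
    rw [hb2, ha2, hc2]
    exact Finset.sum_mul_sq_le_sq_mul_sq Finset.univ _ _
  have hcpos : 0 < c := by nlinarith
  -- spectral inequalities
  have hcNb : c ≤ N * b := by
    rw [hbsum, hcsum, Finset.mul_sum]
    refine Finset.sum_le_sum fun j _ => ?_
    rw [hquadb, hquadc, Finset.mul_sum]
    refine Finset.sum_le_sum fun i _ => ?_
    nlinarith [mul_nonneg (mul_nonneg (sub_nonneg.2 (hlamleN i)) (hnn i))
      (sq_nonneg (⟪B i, v j⟫))]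
  have hσb : σmin ^ 2 * b ≤ c := by
    rw [hbsum, hcsum, Finset.mul_sum]
    refine Finset.sum_le_sum fun j _ => ?_
    rw [hquadb, hquadc, Finset.mul_sum]
    refine Finset.sum_le_sum fun i _ => ?_
    rcases eq_or_ne (lam i) 0 with h0 | h0
    · rw [h0]; ring_nf; exact le_refl 0
    · have h1' := hσmin i h0
      nlinarith [mul_nonneg (mul_nonneg (sub_nonneg.2 h1') (hnn i))
        (sq_nonneg (⟪B i, v j⟫))]
  -- conclusion
  clear hbsum hcsum hquadb hquadc key hTB hsym hTv inner_form trace_form hmat hbDS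
    hσmin hσeig hlamleN hnn hNT hpsd hS hbne hbnn
  clear_value N a b c T v
  clear hTdef hvdef hBdef hlamdef T v lam B
  have h2N : (0:ℝ) < 2 * N := by linarith
  have h2σ : (0:ℝ) < 2 * σmin ^ 2 := mul_pos two_pos (pow_pos hσpos 2)
  refine ⟨?_, le_min ?_ ?_⟩
  · rw [h2, div_le_div_iff₀ h2N hcpos]
    nlinarith [hcNb]
  · rw [h1, h2, div_le_div_iff₀ hcpos hbpos]
    nlinarith [hCS]
  · rw [h2, div_le_div_iff₀ hcpos h2σ]
    nlinarith [hσb]
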